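/- Let G be a k-regular connected graph and H a tree with at least two vertices. Then q(G □ H) = max_{uv ∈ E(H)} min{(d_H(u)+k)/(d_H(u)+k+1), (d_H(v)+k)/(d_H(v)+k+1)}. -/

import Mathlib

open SimpleGraph Set
open scoped Classical

/-- The degree ratio of a vertex `v` with respect to the partition `(s, sᶜ)`:
the size of its closed neighborhood inside its own side divided by the size of
its closed neighborhood in `G`. -/
noncomputable def vertexRatio {V : Type*} (G : SimpleGraph V) (s : Set V) (v : V) : ℝ :=
  (((G.neighborSet v ∩ (if v ∈ s then s else sᶜ)).ncard : ℝ) + 1) /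
    (((G.neighborSet v).ncard : ℝ) + 1)

/-- The worst (minimum) degree ratio over all vertices, for the partition `(s, sᶜ)`. -/
noncomputable def minRatio {V : Type*} (G : SimpleGraph V) (s : Set V) : ℝ :=
  sInf (Set.range (vertexRatio G s))

/-- The optimal degree ratio `q(G)`: the maximum over all nontrivial partitions
of the worst degree ratio. -/
noncomputable def degreeRatio {V : Type*} (G : SimpleGraph V) : ℝ :=
  sSup { r : ℝ | ∃ s : Set V, s.Nonempty ∧ sᶜ.Nonempty ∧ r = minRatio G s }

section Aux

variable {V : Type*} [Finite V]

lemma vertexRatio_nonneg (G : SimpleGraph V) (s : Set V) (v : V) :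
    0 ≤ vertexRatio G s v := by
  unfold vertexRatio
  positivity

lemma vertexRatio_le_one (G : SimpleGraph V) (s : Set V) (v : V) :
    vertexRatio G s v ≤ 1 := by
  unfold vertexRatio
  rw [div_le_one (by positivity)]
  have h : (G.neighborSet v ∩ (if v ∈ s then s else sᶜ)).ncard ≤ (G.neighborSet v).ncard :=
    Set.ncard_le_ncard inter_subset_left (Set.toFinite _)
  have h' := (Nat.cast_le (α := ℝ)).mpr h
  linarith

lemma minRatio_le (G : SimpleGraph V) (s : Set V) (v : V) :
    minRatio G s ≤ vertexRatio G s v :=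
  csInf_le ⟨0, by rintro r ⟨x, rfl⟩; exact vertexRatio_nonneg G s x⟩ ⟨v, rfl⟩

lemma le_minRatio [Nonempty V] (G : SimpleGraph V) (s : Set V) {c : ℝ}
    (h : ∀ v, c ≤ vertexRatio G s v) : c ≤ minRatio G s :=
  le_csInf (Set.range_nonempty _) (by rintro r ⟨x, rfl⟩; exact h x)

lemma bddAbove_degreeRatioSet [Nonempty V] (G : SimpleGraph V) :
    BddAbove { r : ℝ | ∃ s : Set V, s.Nonempty ∧ sᶜ.Nonempty ∧ r = minRatio G s } := by
  refine ⟨1, ?_⟩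
  rintro r ⟨s, -, -, rfl⟩
  exact (minRatio_le G s (Classical.arbitrary V)).trans (vertexRatio_le_one G s _)

lemma minRatio_le_degreeRatio [Nonempty V] (G : SimpleGraph V) {s : Set V}
    (hs : s.Nonempty) (hsc : sᶜ.Nonempty) : minRatio G s ≤ degreeRatio G :=
  le_csSup (bddAbove_degreeRatioSet G) ⟨s, hs, hsc, rfl⟩

lemma closure_walk {H : SimpleGraph V} {S : Set V}
    (hcl : ∀ ⦃a b : V⦄, H.Adj a b → a ∈ S → b ∈ S) :
    ∀ {a b : V}, H.Walk a b → a ∈ S → b ∈ S := by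
  intro a b p
  induction p with
  | nil => exact id
  | cons h q ih => exact fun ha => ih (hcl h ha)

lemma exists_crossing {H : SimpleGraph V} (hc : H.Preconnected) {S : Set V}
    {a b : V} (ha : a ∈ S) (hb : b ∉ S) : ∃ x y, H.Adj x y ∧ x ∈ S ∧ y ∉ S := by
  by_contra hno
  push_neg at hno
  obtain ⟨p⟩ := hc a b
  exact hb (closure_walk (fun x y hxy hx => hno x y hxy hx) p ha)

lemma exists_adj_of_connected [Nontrivial V] {H : SimpleGraph V} (hc : H.Connected)
    (w : V) : ∃ w', H.Adj w w' := by
  obtain ⟨x, hx⟩ := exists_ne w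
  obtain ⟨p⟩ := hc.preconnected w x
  cases p with
  | nil => exact absurd rfl hx.symm
  | cons h q => exact ⟨_, h⟩

lemma ratio_mono {a b : ℝ} (ha : 0 ≤ a) (hab : a ≤ b) : a / (a + 1) ≤ b / (b + 1) := by
  rw [div_le_div_iff₀ (by linarith) (by linarith)]
  nlinarith

lemma vertexRatio_le_of_crossing {G : SimpleGraph V} {s : Set V} {x y : V}
    (hxy : G.Adj x y) (hy : y ∈ s ↔ x ∉ s) :
    vertexRatio G s x ≤ ((G.neighborSet x).ncard : ℝ) / ((G.neighborSet x).ncard + 1) := by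
  unfold vertexRatio
  have hyT : y ∉ (if x ∈ s then s else sᶜ) := by
    split_ifs with h
    · exact fun hys => (hy.mp hys) h
    · exact fun hysc => hysc (hy.mpr h)
  have hlt : (G.neighborSet x ∩ (if x ∈ s then s else sᶜ)).ncard < (G.neighborSet x).ncard := by
    refine Set.ncard_lt_ncard ⟨inter_subset_left, fun hsub => ?_⟩ (Set.toFinite _)
    exact hyT (hsub hxy).2
  rw [div_le_div_iff₀ (by positivity) (by positivity)]
  have h1 : ((G.neighborSet x ∩ (if x ∈ s then s else sᶜ)).ncard : ℝ) + 1
      ≤ ((G.neighborSet x).ncard : ℝ) := by exact_mod_cast hlt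
  nlinarith [Nat.cast_nonneg (α := ℝ) (G.neighborSet x).ncard]

end Aux

lemma boxProd_count {V W : Type*} [Finite V] [Finite W] (G : SimpleGraph V) (H : SimpleGraph W)
    (A : Set W) (g : V) {w : W} (hw : w ∈ A) :
    ((G □ H).neighborSet (g, w) ∩ {p : V × W | p.2 ∈ A}).ncard =
      (G.neighborSet g).ncard + (H.neighborSet w ∩ A).ncard := by
  have hN : (G □ H).neighborSet (g, w)
      = G.neighborSet g ×ˢ {w} ∪ ({g} : Set V) ×ˢ H.neighborSet w := neighborSet_boxProd (g, w)
  rw [hN, Set.union_inter_distrib_right]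
  have h1 : (G.neighborSet g ×ˢ ({w} : Set W)) ∩ {p : V × W | p.2 ∈ A}
      = (fun a => (a, w)) '' G.neighborSet g := by
    ext ⟨a, b⟩
    simp only [Set.mem_inter_iff, Set.mem_prod, Set.mem_singleton_iff, Set.mem_setOf_eq,
      Set.mem_image, Prod.mk.injEq]
    constructor
    · rintro ⟨⟨ha, rfl⟩, -⟩; exact ⟨a, ha, rfl, rfl⟩
    · rintro ⟨x, hx, rfl, rfl⟩; exact ⟨⟨hx, rfl⟩, hw⟩
  have h2 : (({g} : Set V) ×ˢ H.neighborSet w) ∩ {p : V × W | p.2 ∈ A}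
      = (fun b => (g, b)) '' (H.neighborSet w ∩ A) := by
    ext ⟨a, b⟩
    simp only [Set.mem_inter_iff, Set.mem_prod, Set.mem_singleton_iff, Set.mem_setOf_eq,
      Set.mem_image, Prod.mk.injEq]
    constructor
    · rintro ⟨⟨rfl, hb⟩, hA⟩; exact ⟨b, ⟨hb, hA⟩, rfl, rfl⟩
    · rintro ⟨x, ⟨hx, hA⟩, rfl, rfl⟩; exact ⟨⟨rfl, hx⟩, hA⟩
  have hdisj : Disjoint ((fun a => (a, w)) '' G.neighborSet g)
      ((fun b => (g, b)) '' (H.neighborSet w ∩ A)) := by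
    rw [Set.disjoint_left]
    rintro p ⟨x, hx, rfl⟩ ⟨y, ⟨hy, -⟩, hye⟩
    rw [Prod.mk.injEq] at hye
    exact H.irrefl (hye.2 ▸ hy)
  rw [h1, h2, Set.ncard_union_eq hdisj (Set.toFinite _) (Set.toFinite _),
    Set.ncard_image_of_injective _ (fun a b h => congrArg Prod.fst h),
    Set.ncard_image_of_injective _ (fun a b h => congrArg Prod.snd h)]

set_option maxHeartbeats 1000000 in
theorem stmt_18 {V W : Type*} [Fintype V] [Fintype W]
    (G : SimpleGraph V) (H : SimpleGraph W) (k : ℕ) [DecidableRel G.Adj]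
    (hG : G.Connected) (hreg : G.IsRegularOfDegree k)
    (hH : H.IsTree) (hW : Nontrivial W) :
    (∃ u v, H.Adj u v ∧ degreeRatio (G □ H) =
        min ((((H.neighborSet u).ncard : ℝ) + k) / (((H.neighborSet u).ncard : ℝ) + k + 1))
            ((((H.neighborSet v).ncard : ℝ) + k) / (((H.neighborSet v).ncard : ℝ) + k + 1))) ∧
    (∀ u v, H.Adj u v →
        min ((((H.neighborSet u).ncard : ℝ) + k) / (((H.neighborSet u).ncard : ℝ) + k + 1))
            ((((H.neighborSet v).ncard : ℝ) + k) / (((H.neighborSet v).ncard : ℝ) + k + 1))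
          ≤ degreeRatio (G □ H)) := by
  haveI hV : Nonempty V := hG.nonempty
  haveI hWne : Nonempty W := inferInstance
  haveI : Nonempty (V × W) := ⟨(Classical.arbitrary V, Classical.arbitrary W)⟩
  set f : W → ℝ := fun w =>
    (((H.neighborSet w).ncard : ℝ) + k) / (((H.neighborSet w).ncard : ℝ) + k + 1) with hf
  have hk : ∀ g : V, (G.neighborSet g).ncard = k := fun g => by
    rw [Set.ncard_eq_toFinset_card', Set.toFinset_card, card_neighborSet_eq_degree]
    exact hreg g
  have htot : ∀ (g : V) (w : W), ((G □ H).neighborSet (g, w)).ncard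
      = k + (H.neighborSet w).ncard := by
    intro g w
    have h := boxProd_count G H Set.univ g (Set.mem_univ w)
    simpa [hk g] using h
  have hf_nonneg : ∀ w : W, (0:ℝ) ≤ ((H.neighborSet w).ncard : ℝ) + k := fun w => by positivity
  have hf_le_one : ∀ w, f w ≤ 1 := fun w => by
    rw [hf]
    exact div_le_one_of_le₀ (by linarith [hf_nonneg w]) (by positivity)
  have hf_mono : ∀ {w w' : W}, (H.neighborSet w).ncard ≤ (H.neighborSet w').ncard →
      f w ≤ f w' := by
    intro w w' h
    have h' : ((H.neighborSet w).ncard : ℝ) ≤ ((H.neighborSet w').ncard : ℝ) := Nat.cast_le.mpr h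
    exact ratio_mono (hf_nonneg w) (by linarith)
  have hcross : ∀ (s : Set (V × W)) (g : V) (w : W) (y : V × W),
      (G □ H).Adj (g, w) y → (y ∈ s ↔ (g, w) ∉ s) →
      vertexRatio (G □ H) s (g, w) ≤ f w := by
    intro s g w y hadj hy
    refine (vertexRatio_le_of_crossing hadj hy).trans (le_of_eq ?_)
    rw [htot g w, hf]
    push_cast
    ring_nf
  -- the partition attached to an edge of the tree
  have key : ∀ u v : W, H.Adj u v → ∃ s : Set (V × W), s.Nonempty ∧ sᶜ.Nonempty ∧
      min (f u) (f v) ≤ minRatio (G □ H) s := by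
    intro u v huv
    set H' := H \ fromEdgeSet {s(u, v)} with hH'
    set A := {w : W | H'.Reachable u w} with hA
    have hnR : ¬ H'.Reachable u v :=
      isBridge_iff.mp ((isAcyclic_iff_forall_adj_isBridge.mp hH.2) huv)
    have hu : u ∈ A := Reachable.refl u
    have hv : v ∉ A := hnR
    have hadj' : ∀ {w w' : W}, H.Adj w w' → s(w, w') ≠ s(u, v) → H'.Adj w w' := by
      intro w w' h hne
      rw [hH', sdiff_adj]
      exact ⟨h, fun hc => hne (by simpa using ((fromEdgeSet_adj _).mp hc).1)⟩
    have hAdjA : ∀ {w w' : W}, H.Adj w w' → w ∈ A → w' ∈ A ∨ (w = u ∧ w' = v) := by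
      intro w w' h hw
      by_cases he : s(w, w') = s(u, v)
      · rcases Sym2.eq_iff.mp he with ⟨rfl, rfl⟩ | ⟨rfl, rfl⟩
        · exact Or.inr ⟨rfl, rfl⟩
        · exact absurd hw hnR
      · exact Or.inl (hw.trans (hadj' h he).reachable)
    have hAdjB : ∀ {w w' : W}, H.Adj w w' → w ∉ A → w' ∉ A ∨ (w = v ∧ w' = u) := by
      intro w w' h hw
      by_cases he : s(w, w') = s(u, v)
      · rcases Sym2.eq_iff.mp he with ⟨rfl, rfl⟩ | ⟨rfl, rfl⟩
        · exact absurd hu hw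
        · exact Or.inr ⟨rfl, rfl⟩
      · exact Or.inl (fun hw' => hw (hw'.trans (hadj' h he).symm.reachable))
    set spart : Set (V × W) := {p : V × W | p.2 ∈ A} with hspart
    obtain ⟨g0⟩ := hV
    have hne1 : spart.Nonempty := ⟨(g0, u), hu⟩
    have hne2 : spartᶜ.Nonempty := ⟨(g0, v), hv⟩
    refine ⟨spart, hne1, hne2, le_minRatio _ _ ?_⟩
    rintro ⟨g, w⟩
    by_cases hw : w ∈ A
    · have hmem : (g, w) ∈ spart := hw
      rw [vertexRatio, if_pos hmem,
        show ((G □ H).neighborSet (g, w) ∩ spart).ncard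
          = (G.neighborSet g).ncard + (H.neighborSet w ∩ A).ncard from boxProd_count G H A g hw,
        hk g, htot g w]
      by_cases hwu : w = u
      · subst hwu
        have hAv : H.neighborSet w ∩ A = H.neighborSet w \ {v} := by
          ext w'
          simp only [Set.mem_inter_iff, mem_neighborSet, Set.mem_diff, Set.mem_singleton_iff]
          constructor
          · rintro ⟨h1, h2⟩
            exact ⟨h1, fun hc => hv (hc ▸ h2)⟩
          · rintro ⟨h1, h2⟩
            rcases hAdjA h1 hw with h | ⟨-, rfl⟩
            · exact ⟨h1, h⟩
            · exact absurd rfl h2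
        have hd1 : 1 ≤ (H.neighborSet w).ncard :=
          (Set.ncard_pos (Set.toFinite _)).mpr ⟨v, huv⟩
        rw [hAv, Set.ncard_diff_singleton_of_mem (show v ∈ H.neighborSet w from huv)]
        have hnat : k + ((H.neighborSet w).ncard - 1) + 1 = k + (H.neighborSet w).ncard := by
          omega
        have hcast : ((k + ((H.neighborSet w).ncard - 1) : ℕ) : ℝ) + 1
            = ((k + (H.neighborSet w).ncard : ℕ) : ℝ) := by exact_mod_cast hnat
        rw [hcast]
        refine (min_le_left _ _).trans (le_of_eq ?_)
        rw [hf]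
        push_cast
        ring_nf
      · have hAv : H.neighborSet w ∩ A = H.neighborSet w := by
          refine Set.inter_eq_left.mpr fun w' hw' => ?_
          rcases hAdjA hw' hw with h | ⟨h, -⟩
          · exact h
          · exact absurd h hwu
        rw [hAv, div_self (by positivity)]
        exact (min_le_left _ _).trans (hf_le_one u)
    · have hmem : (g, w) ∉ spart := hw
      rw [vertexRatio, if_neg hmem,
        show ((G □ H).neighborSet (g, w) ∩ spartᶜ).ncard
          = (G.neighborSet g).ncard + (H.neighborSet w ∩ Aᶜ).ncard from boxProd_count G H Aᶜ g hw,
        hk g, htot g w]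
      by_cases hwv : w = v
      · subst hwv
        have hAv : H.neighborSet w ∩ Aᶜ = H.neighborSet w \ {u} := by
          ext w'
          simp only [Set.mem_inter_iff, mem_neighborSet, Set.mem_diff, Set.mem_singleton_iff,
            Set.mem_compl_iff]
          constructor
          · rintro ⟨h1, h2⟩
            exact ⟨h1, fun hc => h2 (hc ▸ hu)⟩
          · rintro ⟨h1, h2⟩
            rcases hAdjB h1 hw with h | ⟨-, rfl⟩
            · exact ⟨h1, h⟩
            · exact absurd rfl h2
        have hd1 : 1 ≤ (H.neighborSet w).ncard :=
          (Set.ncard_pos (Set.toFinite _)).mpr ⟨u, huv.symm⟩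
        rw [hAv, Set.ncard_diff_singleton_of_mem (show u ∈ H.neighborSet w from huv.symm)]
        have hnat : k + ((H.neighborSet w).ncard - 1) + 1 = k + (H.neighborSet w).ncard := by
          omega
        have hcast : ((k + ((H.neighborSet w).ncard - 1) : ℕ) : ℝ) + 1
            = ((k + (H.neighborSet w).ncard : ℕ) : ℝ) := by exact_mod_cast hnat
        rw [hcast]
        refine (min_le_right _ _).trans (le_of_eq ?_)
        rw [hf]
        push_cast
        ring_nf
      · have hAv : H.neighborSet w ∩ Aᶜ = H.neighborSet w := by
          refine Set.inter_eq_left.mpr fun w' hw' => ?_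
          rcases hAdjB hw' hw with h | ⟨h, -⟩
          · exact h
          · exact absurd h hwv
        rw [hAv, div_self (by positivity)]
        exact (min_le_left _ _).trans (hf_le_one u)
  have part2 : ∀ u v, H.Adj u v → min (f u) (f v) ≤ degreeRatio (G □ H) := by
    intro u v huv
    obtain ⟨s, h1, h2, h3⟩ := key u v huv
    exact h3.trans (minRatio_le_degreeRatio _ h1 h2)
  -- pick a maximizing edge
  have hPne : (Finset.univ.filter fun p : W × W => H.Adj p.1 p.2).Nonempty := by
    obtain ⟨x, y, hxy⟩ := exists_pair_ne W
    obtain ⟨w', hw'⟩ := exists_adj_of_connected hH.1 x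
    exact ⟨(x, w'), Finset.mem_filter.mpr ⟨Finset.mem_univ _, hw'⟩⟩
  obtain ⟨p0, hp0mem, hp0max⟩ := Finset.exists_max_image
    (Finset.univ.filter fun p : W × W => H.Adj p.1 p.2)
    (fun p => min (f p.1) (f p.2)) hPne
  have huv0 : H.Adj p0.1 p0.2 := (Finset.mem_filter.mp hp0mem).2
  have upper : degreeRatio (G □ H) ≤ min (f p0.1) (f p0.2) := by
    apply csSup_le
    · obtain ⟨s, h1, h2, -⟩ := key p0.1 p0.2 huv0
      exact ⟨minRatio (G □ H) s, s, h1, h2, rfl⟩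
    rintro r ⟨s, hs1, hs2, rfl⟩
    by_cases hc1 : ∃ (g : V) (w w' : W), H.Adj w w' ∧ (g, w) ∈ s ∧ (g, w') ∉ s
    · obtain ⟨g, w, w', hadj, hin, hout⟩ := hc1
      have r1 : vertexRatio (G □ H) s (g, w) ≤ f w :=
        hcross s g w (g, w') (boxProd_adj_right.mpr hadj) (iff_of_false hout (not_not_intro hin))
      have r2 : vertexRatio (G □ H) s (g, w') ≤ f w' :=
        hcross s g w' (g, w) (boxProd_adj_right.mpr hadj.symm) (iff_of_true hin hout)
      have hm : min (f w) (f w') ≤ min (f p0.1) (f p0.2) :=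
        hp0max (w, w') (Finset.mem_filter.mpr ⟨Finset.mem_univ _, hadj⟩)
      calc minRatio (G □ H) s ≤ min (f w) (f w') :=
            le_min ((minRatio_le _ _ _).trans r1) ((minRatio_le _ _ _).trans r2)
        _ ≤ _ := hm
    · push_neg at hc1
      have col : ∀ (g : V) {w w' : W}, (g, w) ∈ s → (g, w') ∈ s := by
        intro g w w' hgw
        obtain ⟨p⟩ := hH.1.preconnected w w'
        exact closure_walk (S := {x : W | (g, x) ∈ s})
          (fun a b hab ha => hc1 g a b hab ha) p hgw
      obtain ⟨wm, -, hwm⟩ := Finset.exists_min_image (Finset.univ : Finset W)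
        (fun w => (H.neighborSet w).ncard) Finset.univ_nonempty
      obtain ⟨⟨g1, w1⟩, hg1⟩ := hs1
      obtain ⟨⟨g2, w2⟩, hg2⟩ := hs2
      have hT1 : g1 ∈ {g : V | (g, wm) ∈ s} := col g1 hg1
      have hT2 : g2 ∉ {g : V | (g, wm) ∈ s} := fun hcm => hg2 (col g2 hcm)
      obtain ⟨x, y, hxy, hxS, hyS⟩ := exists_crossing hG.preconnected hT1 hT2
      have r1 : vertexRatio (G □ H) s (x, wm) ≤ f wm :=
        hcross s x wm (y, wm) (boxProd_adj_left.mpr hxy)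
          (iff_of_false hyS (not_not_intro hxS))
      obtain ⟨w', hw'⟩ := exists_adj_of_connected hH.1 wm
      have hmf : f wm ≤ f w' := hf_mono (hwm w' (Finset.mem_univ _))
      have hm : min (f wm) (f w') ≤ min (f p0.1) (f p0.2) :=
        hp0max (wm, w') (Finset.mem_filter.mpr ⟨Finset.mem_univ _, hw'⟩)
      calc minRatio (G □ H) s ≤ f wm := (minRatio_le _ _ _).trans r1
        _ = min (f wm) (f w') := (min_eq_left hmf).symm
        _ ≤ _ := hm
  exact ⟨⟨p0.1, p0.2, huv0, le_antisymm upper (part2 _ _ huv0)⟩, part2⟩
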